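/- Let Δ be a random vector in R^k and w ∈ R^k a constant vector. Define μ(z) = z/‖z‖₁ if z ≠ 0 and μ(0) = 0. If ⟨E[μ(Δ)], w⟩ ≤ 1/2, then P[‖Δ‖₁ - ⟨Δ, w⟩ < 0] ≤ exp(-1/(32‖w‖₂²)). -/

import Mathlib

open scoped BigOperators RealInnerProductSpace
open MeasureTheory Classical

/-- μ(z) = z/‖z‖₁ if z ≠ 0, else 0. -/
noncomputable def muNorm {k : ℕ} (z : EuclideanSpace ℝ (Fin k)) : EuclideanSpace ℝ (Fin k) :=
  if z = 0 then 0 else (∑ i, |z i|)⁻¹ • z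

lemma norm_le_l1 {k : ℕ} (z : EuclideanSpace ℝ (Fin k)) : ‖z‖ ≤ ∑ i, |z i| := by
  have hnn : 0 ≤ ∑ i, |z i| := Finset.sum_nonneg fun i _ => abs_nonneg _
  rw [EuclideanSpace.norm_eq]
  have h1 : ∑ i, ‖z i‖ ^ 2 ≤ (∑ i, |z i|) ^ 2 := by
    rw [sq, Finset.sum_mul]
    refine Finset.sum_le_sum fun i _ => ?_
    have hi : |z i| ≤ ∑ j, |z j| :=
      Finset.single_le_sum (fun j _ => abs_nonneg (z j)) (Finset.mem_univ i)
    rw [Real.norm_eq_abs, sq]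
    exact mul_le_mul_of_nonneg_left hi (abs_nonneg _)
  calc Real.sqrt (∑ i, ‖z i‖ ^ 2) ≤ Real.sqrt ((∑ i, |z i|) ^ 2) := Real.sqrt_le_sqrt h1
    _ = ∑ i, |z i| := Real.sqrt_sq hnn

lemma muNorm_norm_le {k : ℕ} (z : EuclideanSpace ℝ (Fin k)) : ‖muNorm z‖ ≤ 1 := by
  unfold muNorm
  split_ifs with hz
  · simp
  · have hs : 0 < ∑ i, |z i| := lt_of_lt_of_le (norm_pos_iff.2 hz) (norm_le_l1 z)
    rw [norm_smul, Real.norm_eq_abs, abs_of_nonneg (inv_nonneg.2 hs.le), ← div_eq_inv_mul,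
      div_le_one hs]
    exact norm_le_l1 z

lemma muNorm_measurable {k : ℕ} : Measurable (fun z : EuclideanSpace ℝ (Fin k) => muNorm z) := by
  unfold muNorm
  have hsum : Continuous (fun z : EuclideanSpace ℝ (Fin k) => ∑ i, |z i|) := by
    refine continuous_finset_sum _ fun i _ => ?_
    exact ((EuclideanSpace.proj i : EuclideanSpace ℝ (Fin k) →L[ℝ] ℝ).continuous).abs
  exact Measurable.ite (measurableSet_eq) measurable_const
    (hsum.measurable.inv.smul measurable_id)

/-- If ⟨E[μ(Δ)], w⟩ ≤ 1/2 then P[‖Δ‖₁ - ⟨Δ,w⟩ < 0] ≤ exp(-1/(32‖w‖₂²)). -/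
theorem stmt_0 {k : ℕ} {Ω : Type*} [MeasurableSpace Ω] (P : Measure Ω) [IsProbabilityMeasure P]
    (Δ : Ω → EuclideanSpace ℝ (Fin k)) (hΔ : Measurable Δ)
    (w : EuclideanSpace ℝ (Fin k))
    (hmean : ⟪∫ ω, muNorm (Δ ω) ∂P, w⟫ ≤ 1 / 2) :
    P {ω | (∑ i, |Δ ω i|) - ⟪Δ ω, w⟫ < 0} ≤ ENNReal.ofReal (Real.exp (-1 / (32 * ‖w‖ ^ 2))) := by
  set c : ℝ := ‖w‖ with hc
  set X : Ω → ℝ := fun ω => ⟪muNorm (Δ ω), w⟫ with hXdef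
  set E : Set Ω := {ω | (∑ i, |Δ ω i|) - ⟪Δ ω, w⟫ < 0} with hE
  -- on the event, X > 1
  have hX1 : ∀ ω ∈ E, 1 < X ω := by
    intro ω hω
    have hω' : (∑ i, |Δ ω i|) < ⟪Δ ω, w⟫ := by
      simpa [hE, sub_neg] using hω
    have hz : Δ ω ≠ 0 := by
      intro h
      rw [h] at hω'
      simp at hω'
    have hs : 0 < ∑ i, |Δ ω i| := lt_of_lt_of_le (norm_pos_iff.2 hz) (norm_le_l1 _)
    have : X ω = (∑ i, |Δ ω i|)⁻¹ * ⟪Δ ω, w⟫ := by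
      rw [hXdef]; simp only [muNorm, if_neg hz, real_inner_smul_left]
    rw [this]
    calc (1 : ℝ) = (∑ i, |Δ ω i|)⁻¹ * (∑ i, |Δ ω i|) := (inv_mul_cancel₀ hs.ne').symm
      _ < (∑ i, |Δ ω i|)⁻¹ * ⟪Δ ω, w⟫ :=
        mul_lt_mul_of_pos_left hω' (inv_pos.2 hs)
  have hXbound : ∀ ω, |X ω| ≤ c := fun ω =>
    (abs_real_inner_le_norm _ _).trans
      (by simpa using mul_le_mul_of_nonneg_right (muNorm_norm_le (Δ ω)) (norm_nonneg w))
  rcases le_or_gt c 1 with hcle | hcgt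
  · -- event is empty
    have : E = ∅ := by
      rw [Set.eq_empty_iff_forall_notMem]
      intro ω hω
      have h1 := hX1 ω hω
      have h2 := (abs_le.1 (hXbound ω)).2
      linarith
    rw [this, measure_empty]
    exact zero_le
  · -- Markov's inequality
    have hXmeas : Measurable X := by
      have h1 : Measurable fun ω => muNorm (Δ ω) := muNorm_measurable.comp hΔ
      have h2 : Continuous fun v : EuclideanSpace ℝ (Fin k) => ⟪v, w⟫ :=
        continuous_id.inner continuous_const
      exact h2.measurable.comp h1
    have hXint : Integrable X P :=
      ⟨hXmeas.aestronglyMeasurable,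
        HasFiniteIntegral.of_bounded (C := c) (Filter.Eventually.of_forall fun ω => by
          simpa using hXbound ω)⟩
    have hmuint : Integrable (fun ω => muNorm (Δ ω)) P :=
      ⟨(muNorm_measurable.comp hΔ).aestronglyMeasurable,
        HasFiniteIntegral.of_bounded (C := 1)
          (Filter.Eventually.of_forall fun ω => muNorm_norm_le (Δ ω))⟩
    have hm : ∫ ω, X ω ∂P ≤ 1 / 2 := by
      have : ∫ ω, X ω ∂P = ⟪∫ ω, muNorm (Δ ω) ∂P, w⟫ := by
        rw [real_inner_comm, ← integral_inner hmuint w]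
        simp_rw [hXdef, real_inner_comm]
      rw [this]; exact hmean
    have hfnn : 0 ≤ᵐ[P] fun ω => X ω + c := Filter.Eventually.of_forall fun ω => by
      have := (abs_le.1 (hXbound ω)).1
      show (0 : ℝ) ≤ X ω + c
      linarith
    have hfint : Integrable (fun ω => X ω + c) P := hXint.add (integrable_const c)
    have hmarkov := mul_meas_ge_le_integral_of_nonneg hfnn hfint (1 + c)
    have hintval : ∫ ω, (X ω + c) ∂P ≤ 1 / 2 + c := by
      rw [integral_add hXint (integrable_const c), integral_const]
      simp only [measure_univ, probReal_univ, ENNReal.toReal_one, one_smul, smul_eq_mul]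
      linarith
    have hsub : E ⊆ {ω | 1 + c ≤ X ω + c} := fun ω hω => by
      have := hX1 ω hω
      simp only [Set.mem_setOf_eq]
      linarith
    have hA_ne : P {ω | 1 + c ≤ X ω + c} ≠ ⊤ := measure_ne_top _ _
    have h1c : (0 : ℝ) < 1 + c := by linarith
    have htoReal : (P {ω | 1 + c ≤ X ω + c}).toReal ≤ (1 / 2 + c) / (1 + c) := by
      rw [le_div_iff₀ h1c, mul_comm]
      exact hmarkov.trans hintval
    have hreal : (1 / 2 + c) / (1 + c) ≤ Real.exp (-1 / (32 * c ^ 2)) := by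
      have hc0 : (0 : ℝ) < c := lt_trans one_pos hcgt
      set t : ℝ := (32 * c ^ 2)⁻¹ with htdef
      have ht0 : 0 < t := by positivity
      have ht : t * (32 * c ^ 2) = 1 := inv_mul_cancel₀ (by positivity)
      have harg : -1 / (32 * c ^ 2) = -t := by rw [htdef, neg_div, one_div]
      have hexp : 1 - t ≤ Real.exp (-1 / (32 * c ^ 2)) := by
        rw [harg]
        have := Real.add_one_le_exp (-t)
        linarith
      refine le_trans ?_ hexp
      rw [div_le_iff₀ h1c]
      nlinarith [ht, mul_nonneg ht0.le (show (0:ℝ) ≤ 32 * c ^ 2 - 2 - 2 * c by nlinarith)]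
    calc P E ≤ P {ω | 1 + c ≤ X ω + c} := measure_mono hsub
      _ = ENNReal.ofReal ((P {ω | 1 + c ≤ X ω + c}).toReal) := (ENNReal.ofReal_toReal hA_ne).symm
      _ ≤ ENNReal.ofReal (Real.exp (-1 / (32 * c ^ 2))) :=
        ENNReal.ofReal_le_ofReal (htoReal.trans hreal)
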